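/- Let k be a finite field with q = 2^f elements, f even, and let χ₂ : 𝔽₂ → ℂˣ be the nontrivial character. Then ∑_{ξ ∈ k} χ₂(Tr_{k/𝔽₂}(ξ³)) = −2·(−2)^{f/2}. -/

import Mathlib

/-- The nontrivial character `χ₂ : 𝔽₂ → ℂˣ`, `χ₂(0) = 1`, `χ₂(1) = -1`. -/
noncomputable def χ₂ (x : ZMod 2) : ℂ := (-1) ^ x.val

section Aux

variable {k : Type*} [Field k] [Fintype k] [Algebra (ZMod 2) k]

/-- Integer-valued additive character `x ↦ (-1)^{Tr x}`. -/
noncomputable def psiAux (k : Type*) [Field k] [Fintype k] [Algebra (ZMod 2) k] (x : k) : ℤ :=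
  (-1) ^ (Algebra.trace (ZMod 2) k x).val

lemma psiAux_add (x y : k) : psiAux k (x + y) = psiAux k x * psiAux k y := by
  unfold psiAux
  rw [map_add]
  generalize (Algebra.trace (ZMod 2) k x) = a
  generalize (Algebra.trace (ZMod 2) k y) = b
  revert a b; decide

lemma psiAux_zero : psiAux k 0 = 1 := by
  unfold psiAux; rw [map_zero]; rfl

lemma psiAux_mul_self (x : k) : psiAux k x * psiAux k x = 1 := by
  unfold psiAux
  rcases Nat.even_or_odd (Algebra.trace (ZMod 2) k x).val with h | h
  · rw [h.neg_one_pow]; norm_num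
  · rw [h.neg_one_pow]; norm_num

lemma psiAux_sq (x : k) : psiAux k (x ^ 2) = psiAux k x := by
  haveI : CharP k 2 := charP_of_injective_algebraMap' (ZMod 2) (A := k) 2
  haveI : FiniteDimensional (ZMod 2) k := Module.Finite.of_finite (R := ZMod 2)
  suffices h : Algebra.trace (ZMod 2) k (x ^ 2) = Algebra.trace (ZMod 2) k x by
    unfold psiAux; rw [h]
  apply (algebraMap (ZMod 2) k).injective
  rw [trace_eq_sum_automorphisms, trace_eq_sum_automorphisms]
  let F : k ≃ₐ[ZMod 2] k := AlgEquiv.ofBijective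
    { toRingHom := frobenius k 2
      commutes' := by
        intro a
        show (algebraMap (ZMod 2) k a) ^ 2 = algebraMap (ZMod 2) k a
        rw [← map_pow]
        congr 1
        revert a; decide }
    ⟨frobenius_inj k 2, Finite.surjective_of_injective (frobenius_inj k 2)⟩
  have hx2 : ∀ σ : k ≃ₐ[ZMod 2] k, σ (x ^ 2) = (σ * F) x := fun σ => rfl
  calc ∑ σ : k ≃ₐ[ZMod 2] k, σ (x ^ 2) = ∑ σ : k ≃ₐ[ZMod 2] k, (σ * F) x :=
        Finset.sum_congr rfl fun σ _ => hx2 σ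
    _ = ∑ σ : k ≃ₐ[ZMod 2] k, σ x :=
        Fintype.sum_equiv (Equiv.mulRight F) _ _ (fun σ => rfl)

lemma psiAux_orth [DecidableEq k] (c : k) :
    ∑ η : k, psiAux k (c * η) = if c = 0 then (Fintype.card k : ℤ) else 0 := by
  haveI : FiniteDimensional (ZMod 2) k := Module.Finite.of_finite (R := ZMod 2)
  split_ifs with hc
  · subst hc
    simp [psiAux_zero]
  · obtain ⟨x, hx⟩ := Algebra.trace_surjective (ZMod 2) k 1
    have key : ∀ η : k, psiAux k (c * (η + c⁻¹ * x)) = - psiAux k (c * η) := by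
      intro η
      have h1 : c * (η + c⁻¹ * x) = c * η + x := by
        field_simp
      rw [h1, psiAux_add]
      have h2 : psiAux k x = -1 := by
        unfold psiAux; rw [hx]; rfl
      rw [h2]; ring
    have h0 : ∑ η : k, psiAux k (c * η) = ∑ η : k, psiAux k (c * (η + c⁻¹ * x)) :=
      (Fintype.sum_equiv (Equiv.addRight (c⁻¹ * x)) _ _ (fun η => rfl)).symm
    simp_rw [key] at h0
    rw [Finset.sum_neg_distrib] at h0
    linarith

end Aux

/-- For `k` a finite field with `q = 2^f` elements, `f` even,
`∑_{ξ ∈ k} χ₂(Tr_{k/𝔽₂}(ξ³)) = -2·(-2)^{f/2}`. -/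
theorem stmt11 (k : Type*) [Field k] [Fintype k] [Algebra (ZMod 2) k]
    (f : ℕ) (hf : Even f) (hcard : Fintype.card k = 2 ^ f) :
    ∑ ξ : k, χ₂ (Algebra.trace (ZMod 2) k (ξ ^ 3)) = -2 * (-2 : ℂ) ^ (f / 2) := by
  haveI := Classical.decEq k
  haveI : CharP k 2 := charP_of_injective_algebraMap' (ZMod 2) (A := k) 2
  haveI : FiniteDimensional (ZMod 2) k := Module.Finite.of_finite (R := ZMod 2)
  have h2 : (2 : k) = 0 := by exact_mod_cast CharP.cast_eq_zero k 2
  obtain ⟨m, hm⟩ := hf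
  have hfm : f = 2 * m := by omega
  subst hfm
  set T : ℤ := ∑ ξ : k, psiAux k (ξ ^ 3) with hT
  -- trace of 1 is zero
  have htr1 : Algebra.trace (ZMod 2) k (1 : k) = 0 := by
    have h1 : Algebra.trace (ZMod 2) k ((algebraMap (ZMod 2) k) 1)
        = (Module.finrank (ZMod 2) k) • (1 : ZMod 2) := Algebra.trace_algebraMap 1
    have hfr : Module.finrank (ZMod 2) k = 2 * m := by
      have hc := Module.card_eq_pow_finrank (K := ZMod 2) (V := k)
      rw [ZMod.card, hcard] at hc
      exact (Nat.pow_right_injective (le_refl 2) hc).symm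
    rw [map_one] at h1
    rw [h1, hfr, nsmul_eq_mul, mul_one]
    push_cast
    rw [show ((2 : ZMod 2)) = 0 from rfl]
    ring
  have hpsi1 : psiAux k (1 : k) = 1 := by
    unfold psiAux; rw [htr1]; rfl
  -- the element ω of order 3
  have hdvd3 : 3 ∣ Fintype.card kˣ := by
    rw [Fintype.card_units, hcard]
    have hmod : 2 ^ (2 * m) % 3 = 1 := by
      rw [pow_mul]
      rw [Nat.pow_mod]
      norm_num
    have hpos : 1 ≤ 2 ^ (2 * m) := Nat.one_le_two_pow
    omega
  obtain ⟨ζ, hζ⟩ := @exists_prime_orderOf_dvd_card kˣ _ _ 3 ⟨by norm_num⟩ hdvd3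
  set ω : k := (ζ : k) with hωdef
  have hω3 : ω ^ 3 = 1 := by
    have hz : ζ ^ 3 = 1 := by rw [← hζ]; exact pow_orderOf_eq_one ζ
    have hz' : ((ζ ^ 3 : kˣ) : k) = ((1 : kˣ) : k) := congrArg Units.val hz
    rw [Units.val_pow_eq_pow_val, Units.val_one] at hz'
    rw [hωdef]; exact hz'
  have hω1 : ω ≠ 1 := by
    intro h
    have : ζ = 1 := Units.ext h
    rw [this] at hζ; simp at hζ
  have hω0 : ω ≠ 0 := Units.ne_zero ζ
  have hω21 : ω ^ 2 ≠ 1 := by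
    intro h
    apply hω1
    have h3 : ω ^ 3 = ω ^ 2 * ω := by ring
    rw [hω3, h, one_mul] at h3
    exact h3.symm
  have hωne : ω ≠ ω ^ 2 := by
    intro h
    apply hω21
    have h3 : ω ^ 3 = ω * ω ^ 2 := by ring
    rw [hω3, ← h] at h3
    have : ω * ω = ω ^ 2 := by ring
    rw [this] at h3
    exact h3.symm
  have hωs : ω ^ 2 + ω + 1 = 0 := by
    have hfac : (ω - 1) * (ω ^ 2 + ω + 1) = 0 := by linear_combination hω3
    rcases mul_eq_zero.mp hfac with h | h
    · exact absurd (sub_eq_zero.mp h) hω1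
    · exact h
  -- cube roots of unity
  have hcube : ∀ t : k, t ^ 3 = 1 → t = 1 ∨ t = ω ∨ t = ω ^ 2 := by
    intro t ht
    have hfac : (t - 1) * (t - ω) * (t - ω ^ 2) = 0 := by
      linear_combination ht + (-t ^ 2 + t) * hωs + (t - 1) * hω3
    rcases mul_eq_zero.mp hfac with h | h
    · rcases mul_eq_zero.mp h with h' | h'
      · exact Or.inl (sub_eq_zero.mp h')
      · exact Or.inr (Or.inl (sub_eq_zero.mp h'))
    · exact Or.inr (Or.inr (sub_eq_zero.mp h))
  -- step: 3 ∣ T - 1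
  have hdvdT : (3 : ℤ) ∣ T - 1 := by
    have hsplit := Finset.add_sum_erase Finset.univ (fun x : k => psiAux k (x ^ 3))
      (Finset.mem_univ (0 : k))
    try simp only [zero_pow, psiAux_zero] at hsplit
    have h0 : psiAux k ((0:k) ^ 3) = 1 := by
      rw [zero_pow (by norm_num)]; exact psiAux_zero
    have hTm1 : T - 1 = ∑ x ∈ Finset.univ.erase (0:k), psiAux k (x ^ 3) := by
      rw [hT, ← hsplit, h0]; ring
    rw [hTm1, Finset.sum_comp (psiAux k) (fun x => x ^ 3)]
    apply Finset.dvd_sum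
    intro y hy
    obtain ⟨x₀, hx₀mem, hx₀⟩ := Finset.mem_image.mp hy
    have hx₀0 : x₀ ≠ 0 := Finset.ne_of_mem_erase hx₀mem
    have hy0 : y ≠ 0 := by rw [← hx₀]; exact pow_ne_zero 3 hx₀0
    have hfib : {x ∈ Finset.univ.erase (0:k) | x ^ 3 = y} = {x₀, ω * x₀, ω ^ 2 * x₀} := by
      ext x
      simp only [Finset.mem_filter, Finset.mem_erase, Finset.mem_univ, true_and,
        Finset.mem_insert, Finset.mem_singleton, and_true]
      constructor
      · rintro ⟨hx0, hxc⟩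
        have ht : (x * x₀⁻¹) ^ 3 = 1 := by
          rw [mul_pow, hxc, ← hx₀, inv_pow]
          exact mul_inv_cancel₀ (pow_ne_zero 3 hx₀0)
        rcases hcube _ ht with h | h | h
        · left
          field_simp [hx₀0] at h
          linear_combination h
        · right; left
          field_simp [hx₀0] at h
          linear_combination h
        · right; right
          field_simp [hx₀0] at h
          linear_combination h
      · rintro (rfl | rfl | rfl)
        · exact ⟨hx₀0, hx₀⟩
        · refine ⟨mul_ne_zero hω0 hx₀0, ?_⟩
          rw [mul_pow, hω3, one_mul, hx₀]
        · refine ⟨mul_ne_zero (pow_ne_zero 2 hω0) hx₀0, ?_⟩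
          rw [mul_pow, ← pow_mul, show 2 * 3 = 3 * 2 by norm_num, pow_mul, hω3, one_pow, one_mul, hx₀]
    have hcard3 : ({x₀, ω * x₀, ω ^ 2 * x₀} : Finset k).card = 3 := by
      rw [Finset.card_insert_of_notMem, Finset.card_insert_of_notMem, Finset.card_singleton]
      · simp only [Finset.mem_singleton]
        intro h
        exact hωne (mul_right_cancel₀ hx₀0 h)
      · simp only [Finset.mem_insert, Finset.mem_singleton]
        push_neg
        refine ⟨fun h => hω1 ?_, fun h => hω21 ?_⟩
        · have hh : ω * x₀ = 1 * x₀ := by rw [one_mul, ← h]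
          exact mul_right_cancel₀ hx₀0 hh
        · have hh : ω ^ 2 * x₀ = 1 * x₀ := by rw [one_mul, ← h]
          exact mul_right_cancel₀ hx₀0 hh
    rw [hfib, hcard3]
    exact ⟨psiAux k y, by ring⟩
  -- step: T² = 4q
  have hsqbij : Function.Bijective (fun w : k => w ^ 2) := by
    have : (fun w : k => w ^ 2) = frobenius k 2 := rfl
    rw [this]
    exact ⟨frobenius_inj k 2, Finite.surjective_of_injective (frobenius_inj k 2)⟩
  have hTsq : T ^ 2 = 4 * (2 ^ (2 * m) : ℤ) := by
    have e1 : T ^ 2 = ∑ ξ : k, ∑ η : k, psiAux k (ξ ^ 3) * psiAux k (η ^ 3) := by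
      rw [sq, hT, Finset.sum_mul_sum]
    have e2 : ∀ η : k, ∑ ξ : k, psiAux k (ξ ^ 3) * psiAux k (η ^ 3)
        = ∑ u : k, psiAux k (u ^ 3) * psiAux k (u ^ 2 * η + u * η ^ 2) := by
      intro η
      rw [← (Fintype.sum_equiv (Equiv.addRight η)
        (fun u => psiAux k ((u + η) ^ 3) * psiAux k (η ^ 3))
        (fun ξ => psiAux k (ξ ^ 3) * psiAux k (η ^ 3)) (fun u => rfl))]
      apply Finset.sum_congr rfl; intro u _
      have hident : (u + η) ^ 3 = (u ^ 3 + (u ^ 2 * η + u * η ^ 2)) + η ^ 3 := by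
        linear_combination (u ^ 2 * η + u * η ^ 2) * h2
      rw [hident, psiAux_add, psiAux_add]
      have := psiAux_mul_self (η ^ 3)
      calc psiAux k (u ^ 3) * psiAux k (u ^ 2 * η + u * η ^ 2) * psiAux k (η ^ 3) * psiAux k (η ^ 3)
          = psiAux k (u ^ 3) * psiAux k (u ^ 2 * η + u * η ^ 2)
            * (psiAux k (η ^ 3) * psiAux k (η ^ 3)) := by ring
        _ = psiAux k (u ^ 3) * psiAux k (u ^ 2 * η + u * η ^ 2) := by rw [this, mul_one]
    have e3 : T ^ 2 = ∑ u : k, psiAux k (u ^ 3) * ∑ η : k, psiAux k (u ^ 2 * η + u * η ^ 2) := by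
      rw [e1, Finset.sum_comm]
      simp_rw [e2]
      rw [Finset.sum_comm]
      simp_rw [Finset.mul_sum]
    have e4 : T ^ 2 = ∑ w : k, psiAux k (w ^ 6) * ∑ η : k, psiAux k ((w ^ 4 + w) * η) := by
      rw [e3, ← Function.Bijective.sum_comp hsqbij
        (fun u => psiAux k (u ^ 3) * ∑ η : k, psiAux k (u ^ 2 * η + u * η ^ 2))]
      apply Finset.sum_congr rfl; intro w _
      have hp1 : (w ^ 2) ^ 3 = w ^ 6 := by ring
      rw [hp1]
      congr 1
      apply Finset.sum_congr rfl; intro η _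
      have hident : (w ^ 2) ^ 2 * η + w ^ 2 * η ^ 2 = w ^ 4 * η + (w * η) ^ 2 := by ring
      rw [hident, psiAux_add, psiAux_sq, ← psiAux_add]
      congr 1
      ring
    simp_rw [psiAux_orth] at e4
    rw [e4]
    have hfilt : ({w ∈ Finset.univ | w ^ 4 + w = 0} : Finset k) = {0, 1, ω, ω ^ 2} := by
      ext u
      simp only [Finset.mem_filter, Finset.mem_univ, true_and, Finset.mem_insert,
        Finset.mem_singleton]
      constructor
      · intro hu
        by_cases hu0 : u = 0
        · exact Or.inl hu0
        · have hu3 : u ^ 3 = 1 := by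
            have hfac : u * (u ^ 3 - 1) = 0 := by linear_combination hu - u * h2
            rcases mul_eq_zero.mp hfac with h | h
            · exact absurd h hu0
            · linear_combination h
          exact Or.inr (hcube u hu3)
      · rintro (rfl | rfl | rfl | rfl)
        · ring
        · linear_combination h2
        · linear_combination ω * hω3 + ω * h2
        · linear_combination (ω ^ 5 + ω ^ 2) * hω3 + ω ^ 2 * h2
    calc ∑ w : k, psiAux k (w ^ 6) * (if w ^ 4 + w = 0 then (Fintype.card k : ℤ) else 0)
        = ∑ w ∈ ({w ∈ Finset.univ | w ^ 4 + w = 0} : Finset k),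
            psiAux k (w ^ 6) * (Fintype.card k : ℤ) := by
          rw [Finset.sum_filter]
          apply Finset.sum_congr rfl; intro w _
          by_cases h : w ^ 4 + w = 0 <;> simp [h]
      _ = 4 * (2 ^ (2 * m) : ℤ) := by
          rw [hfilt, hcard]
          have h0m : (0 : k) ∉ ({1, ω, ω ^ 2} : Finset k) := by
            simp only [Finset.mem_insert, Finset.mem_singleton]
            push_neg
            exact ⟨fun h => one_ne_zero h.symm, fun h => hω0 h.symm,
              fun h => pow_ne_zero 2 hω0 h.symm⟩
          have h1m : (1 : k) ∉ ({ω, ω ^ 2} : Finset k) := by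
            simp only [Finset.mem_insert, Finset.mem_singleton]
            push_neg
            exact ⟨fun h => hω1 h.symm, fun h => hω21 h.symm⟩
          have hωm : ω ∉ ({ω ^ 2} : Finset k) := by
            simp only [Finset.mem_singleton]
            exact hωne
          rw [Finset.sum_insert h0m, Finset.sum_insert h1m, Finset.sum_insert hωm,
            Finset.sum_singleton]
          have hz : psiAux k ((0:k) ^ 6) = 1 := by
            rw [zero_pow (by norm_num)]; exact psiAux_zero
          have ho : psiAux k ((1:k) ^ 6) = 1 := by rw [one_pow]; exact hpsi1
          have hw6 : psiAux k (ω ^ 6) = 1 := by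
            have : ω ^ 6 = (ω ^ 3) ^ 2 := by ring
            rw [this, hω3, one_pow]; exact hpsi1
          have hw26 : psiAux k ((ω ^ 2) ^ 6) = 1 := by
            have : (ω ^ 2) ^ 6 = (ω ^ 3) ^ 4 := by ring
            rw [this, hω3, one_pow]; exact hpsi1
          rw [hz, ho, hw6, hw26]
          push_cast
          ring
  -- conclude T = (-2)^(m+1)
  have hTval : T = (-2 : ℤ) ^ (m + 1) := by
    have hsq' : T ^ 2 = ((-2 : ℤ) ^ (m + 1)) ^ 2 := by
      rw [hTsq, ← pow_mul]
      rw [show (m + 1) * 2 = 2 * m + 2 by ring]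
      rw [show ((-2 : ℤ)) ^ (2 * m + 2) = ((-2) ^ 2) ^ (m + 1) by rw [← pow_mul]; ring_nf]
      rw [show ((-2 : ℤ)) ^ 2 = 4 by norm_num]
      rw [show (4 : ℤ) ^ (m + 1) = 4 * 4 ^ m by ring]
      congr 1
      rw [show (4 : ℤ) = 2 ^ 2 by norm_num, ← pow_mul]
    have hfac : (T - (-2) ^ (m + 1)) * (T + (-2) ^ (m + 1)) = 0 := by
      linear_combination hsq'
    rcases mul_eq_zero.mp hfac with h | h
    · linarith [sub_eq_zero.mp h]
    · exfalso
      have hTneg : T = -(-2 : ℤ) ^ (m + 1) := by linarith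
      have hz : ((T - 1 : ℤ) : ZMod 3) = 0 :=
        (ZMod.intCast_zmod_eq_zero_iff_dvd (T - 1) 3).mpr hdvdT
      rw [hTneg] at hz
      push_cast at hz
      have hn2 : (-(2 : ZMod 3)) = 1 := by decide
      rw [hn2, one_pow] at hz
      have hne : ((-1 - 1 : ZMod 3)) ≠ 0 := by decide
      exact hne hz
  -- final: cast to ℂ
  have hdiv : 2 * m / 2 = m := by omega
  rw [hdiv]
  have hcast : ∑ ξ : k, χ₂ (Algebra.trace (ZMod 2) k (ξ ^ 3)) = ((T : ℤ) : ℂ) := by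
    rw [hT]
    push_cast
    apply Finset.sum_congr rfl
    intro ξ _
    unfold χ₂ psiAux
    push_cast
    ring
  rw [hcast, hTval]
  push_cast
  rw [pow_succ]
  ring
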